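/- If k ≥ 3 is odd, then for all x_1,…,x_k ∈ H_n one has the equality ∑_{i=1}^k m(x_1,…,x_{i-1},x_{i+1},…,x_k) = (k-1) · m(x_1,…,x_k), where the i-th summand is the inertia of the (k-1)-tuple obtained by deleting x_i. In particular, for k = 3: m(x_1,x_2) + m(x_2,x_3) + m(x_3,x_1) = 2 · m(x_1,x_2,x_3). -/
import Mathlib


/-- The inertia of a `k`-tuple of points of `H_n`: `min_y ∑ᵢ d(y, xᵢ)`
(the average radius is the inertia divided by `k`). -/
def inertia {n k : ℕ} (x : Fin k → Fin n → ZMod 2) : ℕ :=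
  Finset.inf' Finset.univ Finset.univ_nonempty
    (fun y : Fin n → ZMod 2 => ∑ i, hammingDist y (x i))

lemma per_coord {k : ℕ} (v : Fin k → ZMod 2) (b : ZMod 2) :
    (∑ i, if b ≠ v i then (1:ℕ) else 0) =
      if b = 0 then (∑ i, if v i = 1 then (1:ℕ) else 0)
      else k - (∑ i, if v i = 1 then (1:ℕ) else 0) := by
  have hb : b = 0 ∨ b = 1 := by revert b; decide
  rcases hb with hb | hb
  · subst hb
    simp only [if_pos rfl]
    refine Finset.sum_congr rfl fun i _ => ?_
    have : ∀ a : ZMod 2, (if (0:ZMod 2) ≠ a then (1:ℕ) else 0) =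
        (if a = 1 then (1:ℕ) else 0) := by decide
    exact this (v i)
  · subst hb
    have h0 : ((1:ZMod 2) = 0) = False := by simp
    rw [if_neg (by decide : ¬ (1:ZMod 2) = 0)]
    have hsum : (∑ i, if (1:ZMod 2) ≠ v i then (1:ℕ) else 0) +
        (∑ i, if v i = 1 then (1:ℕ) else 0) = k := by
      rw [← Finset.sum_add_distrib]
      have : ∀ a : ZMod 2, (if (1:ZMod 2) ≠ a then (1:ℕ) else 0) +
          (if a = 1 then (1:ℕ) else 0) = 1 := by decide
      simp only [this, Finset.sum_const, smul_eq_mul, mul_one, Finset.card_univ,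
        Fintype.card_fin]
    omega

lemma inertia_eq {n k : ℕ} (x : Fin k → Fin n → ZMod 2) :
    inertia x = ∑ c, min (∑ i, if x i c = 1 then (1:ℕ) else 0)
      (k - ∑ i, if x i c = 1 then (1:ℕ) else 0) := by
  set t : Fin n → ℕ := fun c => ∑ i, if x i c = 1 then (1:ℕ) else 0 with ht
  have hdist : ∀ y : Fin n → ZMod 2,
      (∑ i, hammingDist y (x i)) = ∑ c, if y c = 0 then t c else k - t c := by
    intro y
    have h1 : ∀ i, hammingDist y (x i) = ∑ c, if y c ≠ x i c then (1:ℕ) else 0 := by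
      intro i
      rw [hammingDist, Finset.card_filter]
    simp only [h1]
    rw [Finset.sum_comm]
    refine Finset.sum_congr rfl fun c _ => ?_
    exact per_coord (fun i => x i c) (y c)
  apply le_antisymm
  · have hy0 : (fun c : Fin n => if t c ≤ k - t c then (0:ZMod 2) else 1) ∈
        (Finset.univ : Finset (Fin n → ZMod 2)) := Finset.mem_univ _
    refine le_trans (Finset.inf'_le _ hy0) ?_
    rw [hdist]
    refine le_of_eq (Finset.sum_congr rfl fun c _ => ?_)
    by_cases h : t c ≤ k - t c
    · rw [if_pos h, if_pos rfl, min_eq_left h]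
    · rw [if_neg h, if_neg (by decide : ¬ (1:ZMod 2) = 0),
        min_eq_right (le_of_not_ge h)]
  · refine Finset.le_inf' _ _ fun y _ => ?_
    rw [hdist]
    refine Finset.sum_le_sum fun c _ => ?_
    by_cases h : y c = 0
    · rw [if_pos h]; exact min_le_left _ _
    · rw [if_neg h]; exact min_le_right _ _

lemma key_numeric (m t : ℕ) (hodd : Odd (m + 1)) (ht : t ≤ m + 1) :
    t * min (t - 1) (m + 1 - t) + (m + 1 - t) * min t (m - t)
      = m * min t (m + 1 - t) := by
  have hne : 2 * t ≠ m + 1 := by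
    intro h
    rcases hodd with ⟨q, hq⟩
    omega
  rcases Nat.lt_or_ge (2 * t) (m + 1) with h | h
  · -- 2t ≤ m
    have h1 : min t (m + 1 - t) = t := by omega
    have h2 : min t (m - t) = t := by omega
    have h3 : min (t - 1) (m + 1 - t) = t - 1 := by omega
    rw [h1, h2, h3]
    rcases Nat.eq_zero_or_pos t with h0 | h0
    · subst h0; simp
    · have hle : t ≤ m := by omega
      zify [Nat.one_le_iff_ne_zero.mpr (by omega : t ≠ 0), hle,
        (by omega : t ≤ m + 1)]
      ring
  · -- 2t ≥ m + 2
    have h' : m + 2 ≤ 2 * t := by omega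
    have h1 : min t (m + 1 - t) = m + 1 - t := by omega
    have h2 : min t (m - t) = m - t := by omega
    have h3 : min (t - 1) (m + 1 - t) = m + 1 - t := by omega
    rw [h1, h2, h3]
    rcases Nat.lt_or_ge m t with hmt | hmt
    · have : t = m + 1 := by omega
      subst this
      simp
    · zify [ht, hmt, (by omega : t ≤ m + 1)]
      ring

/-- For an odd number `m+1 ≥ 3` of points, the sum of the inertias of the
deleted `m`-tuples equals `m` times the inertia of the whole tuple. -/
theorem sum_inertia_deleted_eq_of_odd {n m : ℕ} (hm : 2 ≤ m)
    (hodd : Odd (m + 1)) (x : Fin (m + 1) → Fin n → ZMod 2) :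
    (∑ i : Fin (m + 1), inertia (fun j : Fin m => x (i.succAbove j))) =
      m * inertia x := by
  set t : Fin n → ℕ := fun c => ∑ i, if x i c = 1 then (1:ℕ) else 0 with htdef
  have ht : ∀ c, t c ≤ m + 1 := by
    intro c
    calc t c ≤ ∑ _i : Fin (m + 1), 1 :=
          Finset.sum_le_sum fun i _ => by split <;> omega
      _ = m + 1 := by simp
  simp only [inertia_eq]
  rw [Finset.sum_comm, Finset.mul_sum]
  refine Finset.sum_congr rfl fun c _ => ?_
  have hsucc : ∀ i : Fin (m + 1),
      (if x i c = 1 then (1:ℕ) else 0) +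
        (∑ j : Fin m, if x (i.succAbove j) c = 1 then (1:ℕ) else 0) = t c := by
    intro i
    exact (Fin.sum_univ_succAbove (fun j => if x j c = 1 then (1:ℕ) else 0) i).symm
  have hstep : ∀ i : Fin (m + 1),
      min (∑ j : Fin m, if x (i.succAbove j) c = 1 then (1:ℕ) else 0)
        (m - ∑ j : Fin m, if x (i.succAbove j) c = 1 then (1:ℕ) else 0)
      = if x i c = 1 then min (t c - 1) (m + 1 - t c)
        else min (t c) (m - t c) := by
    intro i
    have h := hsucc i
    by_cases hx : x i c = 1
    · rw [if_pos hx] at h ⊢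
      have hc := ht c
      omega
    · rw [if_neg hx] at h ⊢
      omega
  simp only [hstep]
  rw [Finset.sum_ite, Finset.sum_const, Finset.sum_const, smul_eq_mul, smul_eq_mul]
  have hcard1 : (Finset.univ.filter fun i : Fin (m + 1) => x i c = 1).card = t c := by
    rw [Finset.card_filter]
  have hcard2 : (Finset.univ.filter fun i : Fin (m + 1) => ¬ x i c = 1).card
      = m + 1 - t c := by
    have := Finset.card_filter_add_card_filter_not
      (s := (Finset.univ : Finset (Fin (m + 1)))) (p := fun i => x i c = 1)
    simp only [Finset.card_univ, Fintype.card_fin] at this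
    omega
  rw [hcard1, hcard2]
  exact key_numeric m (t c) hodd (ht c)
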